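/- Let k be a commutative ring, A a Z-graded k-algebra, f₁,…,fₙ ∈ A homogeneous of degree d ≥ 1, and let β : A[T₁,…,Tₙ] → A[Z,Z⁻¹] be the A-algebra morphism to the Laurent polynomial ring sending each Tᵢ to fᵢ·Z⁻¹. Then ker(β) = TF_{(Z)}((f₁−T₁Z, …, fₙ−TₙZ)) ∩ A[T₁,…,Tₙ], where the inertia forms are computed in the polynomial ring A[T₁,…,Tₙ,Z] with respect to the ideal (Z). -/

import Mathlib

/-- The ideal of inertia forms (Trägheitsformen) of `I` with respect to `J`. -/
noncomputable def inertiaForms {R : Type*} [CommRing R] (J I : Ideal R) : Ideal R :=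
  ⨆ n : ℕ, I.colon ((J ^ n : Ideal R) : Set R)

/-- The `A`-algebra morphism `β : A[T₁,…,Tₙ] → A[Z,Z⁻¹]`, `Tᵢ ↦ fᵢ·Z⁻¹` (its image is the
Rees algebra of the ideal `(f₁,…,fₙ)`). -/
noncomputable def reesBeta {A : Type*} [CommRing A] {n : ℕ} (f : Fin n → A) :
    MvPolynomial (Fin n) A →ₐ[A] LaurentPolynomial A :=
  MvPolynomial.aeval fun i => LaurentPolynomial.C (f i) * LaurentPolynomial.T (-1)

/-- The ideal `(f₁ - T₁Z, …, fₙ - TₙZ)` of `A[T₁,…,Tₙ][Z]`. -/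
noncomputable def fTZIdeal {A : Type*} [CommRing A] {n : ℕ} (f : Fin n → A) :
    Ideal (Polynomial (MvPolynomial (Fin n) A)) :=
  Ideal.span (Set.range fun i =>
    Polynomial.C (MvPolynomial.C (f i)) - Polynomial.C (MvPolynomial.X i) * Polynomial.X)

section Aux

open Polynomial LaurentPolynomial

variable {A : Type*} [CommRing A] {n : ℕ}

/-- The extension `B : A[T₁,…,Tₙ][Z] → A[Z,Z⁻¹]`, `Tᵢ ↦ fᵢ·Z⁻¹`, `Z ↦ Z`. -/
noncomputable def bigB (f : Fin n → A) :
    Polynomial (MvPolynomial (Fin n) A) →+* LaurentPolynomial A :=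
  Polynomial.eval₂RingHom (reesBeta f).toRingHom (LaurentPolynomial.T 1)

lemma bigB_C (f : Fin n → A) (p : MvPolynomial (Fin n) A) :
    bigB f (Polynomial.C p) = reesBeta f p := by
  simp [bigB]

lemma bigB_X (f : Fin n → A) : bigB f Polynomial.X = LaurentPolynomial.T 1 := by
  simp [bigB]

lemma reesBeta_C (f : Fin n → A) (a : A) :
    reesBeta f (MvPolynomial.C a) = LaurentPolynomial.C a := by
  simp [reesBeta, LaurentPolynomial.algebraMap_apply]

lemma fTZ_le_ker (f : Fin n → A) : fTZIdeal f ≤ RingHom.ker (bigB f) := by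
  rw [fTZIdeal, Ideal.span_le]
  rintro _ ⟨i, rfl⟩
  simp only [SetLike.mem_coe, RingHom.mem_ker, map_sub, map_mul, bigB_C, bigB_X, reesBeta_C]
  rw [reesBeta, MvPolynomial.aeval_X, mul_assoc, ← LaurentPolynomial.T_add]
  simp

lemma bigB_map_C (f : Fin n → A) (q : Polynomial A) :
    bigB f (q.map MvPolynomial.C) = q.toLaurent := by
  induction q using Polynomial.induction_on' with
  | add p q hp hq => simp [Polynomial.map_add, map_add, hp, hq]
  | monomial k a =>
    rw [Polynomial.map_monomial, ← Polynomial.C_mul_X_pow_eq_monomial,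
      ← Polynomial.C_mul_X_pow_eq_monomial]
    simp [map_mul, map_pow, bigB_C, bigB_X, reesBeta_C, Polynomial.toLaurent_C,
      Polynomial.toLaurent_X]

lemma sub_mul_sub_mem {R : Type*} [CommRing R] {I : Ideal R} {a b c d : R}
    (h1 : a - b ∈ I) (h2 : c - d ∈ I) : a * c - b * d ∈ I := by
  have : a * c - b * d = a * (c - d) + d * (a - b) := by ring
  rw [this]
  exact I.add_mem (I.mul_mem_left _ h2) (I.mul_mem_left _ h1)

lemma reduce_mv (f : Fin n → A) (r : MvPolynomial (Fin n) A) :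
    ∃ (m : ℕ) (q : Polynomial A),
      Polynomial.X ^ m * Polynomial.C r - q.map MvPolynomial.C ∈ fTZIdeal f := by
  induction r using MvPolynomial.induction_on with
  | C a =>
    exact ⟨0, Polynomial.C a, by simp⟩
  | add p r hp hr =>
    obtain ⟨m1, q1, h1⟩ := hp
    obtain ⟨m2, q2, h2⟩ := hr
    refine ⟨max m1 m2, Polynomial.X ^ (max m1 m2 - m1) * q1
      + Polynomial.X ^ (max m1 m2 - m2) * q2, ?_⟩
    have e : Polynomial.X (R := MvPolynomial (Fin n) A) ^ max m1 m2 * Polynomial.C (p + r)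
        - (Polynomial.X ^ (max m1 m2 - m1) * q1
          + Polynomial.X ^ (max m1 m2 - m2) * q2).map MvPolynomial.C
        = Polynomial.X ^ (max m1 m2 - m1)
            * (Polynomial.X ^ m1 * Polynomial.C p - q1.map MvPolynomial.C)
          + Polynomial.X ^ (max m1 m2 - m2)
            * (Polynomial.X ^ m2 * Polynomial.C r - q2.map MvPolynomial.C) := by
      rw [Polynomial.map_add, Polynomial.map_mul, Polynomial.map_mul, Polynomial.map_pow,
        Polynomial.map_pow, Polynomial.map_X, map_add Polynomial.C]
      ring_nf
      rw [← pow_add, ← pow_add, Nat.sub_add_cancel (le_max_left m1 m2),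
        Nat.sub_add_cancel (le_max_right m1 m2)]
      ring
    rw [e]
    exact Ideal.add_mem _ (Ideal.mul_mem_left _ _ h1) (Ideal.mul_mem_left _ _ h2)
  | mul_X p i hp =>
    obtain ⟨m, q, h⟩ := hp
    refine ⟨m + 1, Polynomial.C (f i) * q, ?_⟩
    have hg : Polynomial.C (MvPolynomial.C (f i))
        - Polynomial.C (MvPolynomial.X i) * Polynomial.X ∈ fTZIdeal f :=
      Ideal.subset_span ⟨i, rfl⟩
    have hg' : Polynomial.C (MvPolynomial.X i) * Polynomial.X
        - Polynomial.C (MvPolynomial.C (f i)) ∈ fTZIdeal f := by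
      have := (fTZIdeal f).neg_mem hg
      simpa using this
    have e : Polynomial.X ^ (m + 1) * Polynomial.C (p * MvPolynomial.X i)
        - (Polynomial.C (f i) * q).map MvPolynomial.C
        = (Polynomial.X ^ m * Polynomial.C p)
            * (Polynomial.C (MvPolynomial.X i) * Polynomial.X)
          - (q.map MvPolynomial.C) * Polynomial.C (MvPolynomial.C (f i)) := by
      rw [Polynomial.map_mul, Polynomial.map_C, map_mul Polynomial.C]
      ring
    rw [e]
    exact sub_mul_sub_mem h hg'

lemma reduce_poly (f : Fin n → A) (P : Polynomial (MvPolynomial (Fin n) A)) :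
    ∃ (m : ℕ) (q : Polynomial A),
      Polynomial.X ^ m * P - q.map MvPolynomial.C ∈ fTZIdeal f := by
  induction P using Polynomial.induction_on' with
  | add p r hp hr =>
    obtain ⟨m1, q1, h1⟩ := hp
    obtain ⟨m2, q2, h2⟩ := hr
    refine ⟨max m1 m2, Polynomial.X ^ (max m1 m2 - m1) * q1
      + Polynomial.X ^ (max m1 m2 - m2) * q2, ?_⟩
    have e : Polynomial.X ^ max m1 m2 * (p + r)
        - (Polynomial.X ^ (max m1 m2 - m1) * q1
          + Polynomial.X ^ (max m1 m2 - m2) * q2).map MvPolynomial.C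
        = Polynomial.X ^ (max m1 m2 - m1)
            * (Polynomial.X ^ m1 * p - q1.map MvPolynomial.C)
          + Polynomial.X ^ (max m1 m2 - m2)
            * (Polynomial.X ^ m2 * r - q2.map MvPolynomial.C) := by
      rw [Polynomial.map_add, Polynomial.map_mul, Polynomial.map_mul, Polynomial.map_pow,
        Polynomial.map_pow, Polynomial.map_X]
      ring_nf
      rw [← pow_add, ← pow_add, Nat.sub_add_cancel (le_max_left m1 m2),
        Nat.sub_add_cancel (le_max_right m1 m2)]
      ring
    rw [e]
    exact Ideal.add_mem _ (Ideal.mul_mem_left _ _ h1) (Ideal.mul_mem_left _ _ h2)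
  | monomial k a =>
    obtain ⟨m, q, h⟩ := reduce_mv f a
    refine ⟨m, q * Polynomial.X ^ k, ?_⟩
    have e : Polynomial.X ^ m * Polynomial.monomial k a
        - (q * Polynomial.X ^ k).map MvPolynomial.C
        = (Polynomial.X ^ m * Polynomial.C a - q.map MvPolynomial.C) * Polynomial.X ^ k := by
      rw [Polynomial.map_mul, Polynomial.map_pow, Polynomial.map_X,
        ← Polynomial.C_mul_X_pow_eq_monomial]
      ring
    rw [e]
    exact Ideal.mul_mem_right _ _ h

lemma mem_inertiaForms_iff {R : Type*} [CommRing R] (x : R) (I : Ideal R) (a : R) :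
    a ∈ inertiaForms (Ideal.span {x}) I ↔ ∃ m : ℕ, a * x ^ m ∈ I := by
  have hdir : Directed (· ≤ ·) fun m : ℕ => I.colon ((Ideal.span {x} ^ m : Ideal R) : Set R) := by
    refine Monotone.directed_le fun m m' hm => ?_
    exact Submodule.colon_mono le_rfl (SetLike.coe_subset_coe.mpr (Ideal.pow_le_pow_right hm))
  rw [inertiaForms, Submodule.mem_iSup_of_directed _ hdir]
  constructor
  · rintro ⟨m, hm⟩
    rw [Ideal.span_singleton_pow, Ideal.mem_colon_span_singleton] at hm
    exact ⟨m, hm⟩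
  · rintro ⟨m, hm⟩
    exact ⟨m, by rw [Ideal.span_singleton_pow, Ideal.mem_colon_span_singleton]; exact hm⟩

lemma ker_bigB (f : Fin n → A) :
    RingHom.ker (bigB f)
      = inertiaForms (Ideal.span {(Polynomial.X : Polynomial (MvPolynomial (Fin n) A))})
          (fTZIdeal f) := by
  ext P
  rw [mem_inertiaForms_iff, RingHom.mem_ker]
  constructor
  · intro hP
    obtain ⟨m, q, hq⟩ := reduce_poly f P
    have hBq : bigB f (q.map MvPolynomial.C) = 0 := by
      have h1 : bigB f (Polynomial.X ^ m * P) = 0 := by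
        rw [map_mul, hP, mul_zero]
      have h2 := fTZ_le_ker f hq
      rw [RingHom.mem_ker, map_sub, h1, zero_sub, neg_eq_zero] at h2
      exact h2
    rw [bigB_map_C] at hBq
    have hq0 : q = 0 := Polynomial.toLaurent_injective hBq
    rw [hq0, Polynomial.map_zero, sub_zero] at hq
    exact ⟨m, by rwa [mul_comm] at hq⟩
  · rintro ⟨m, hm⟩
    have h0 : bigB f (P * Polynomial.X ^ m) = 0 := fTZ_le_ker f hm
    rw [map_mul, map_pow, bigB_X] at h0
    have hu : IsUnit ((LaurentPolynomial.T 1 : LaurentPolynomial A) ^ m) :=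
      (LaurentPolynomial.isUnit_T 1).pow m
    obtain ⟨u, hu'⟩ := hu
    rw [← hu'] at h0
    have := congrArg (· * (↑u⁻¹ : LaurentPolynomial A)) h0
    simpa [mul_assoc] using this

lemma bigB_comp_C (f : Fin n → A) :
    (bigB f).comp (Polynomial.C : MvPolynomial (Fin n) A →+* _)
      = (reesBeta f : MvPolynomial (Fin n) A →+* LaurentPolynomial A) := by
  ext p <;> simp [bigB_C, reesBeta]

end Aux

/-- `ker β = TF_{(Z)}((f₁-T₁Z,…,fₙ-TₙZ)) ∩ A[T₁,…,Tₙ]`, the intersection with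
`A[T₁,…,Tₙ]` being the preimage under the inclusion `A[T] ⊆ A[T][Z]`. -/
theorem statement2 {k A : Type*} [CommRing k] [CommRing A] [Algebra k A]
    (𝒜 : ℤ → Submodule k A) [GradedAlgebra 𝒜]
    (n : ℕ) (d : ℤ) (hd : 1 ≤ d) (f : Fin n → A) (hf : ∀ i, f i ∈ 𝒜 d) :
    RingHom.ker (reesBeta f)
      = Ideal.comap
          (Polynomial.C : MvPolynomial (Fin n) A →+* Polynomial (MvPolynomial (Fin n) A))
          (inertiaForms (Ideal.span {Polynomial.X}) (fTZIdeal f)) := by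
  rw [← ker_bigB, RingHom.comap_ker, bigB_comp_C]; rfl
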